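/- Let x be a nonempty finite word and let w = x^ω = x x x ⋯ be the periodic infinite word with period x. If x = uv where u and v are palindromes, then the strictly increasing sequence n_1 < n_2 < ⋯ of all lengths of palindromic prefixes of w satisfies limsup_{i→∞} n_{i+1}/n_i = 1; that is, the palindrome density dens_p(w) := (limsup_{i→∞} n_{i+1}/n_i)^{-1} equals 1. -/

import Mathlib

/-- The prefix of length `n` of `w` is a palindrome. -/
def PalindromicPrefix {A : Type*} (w : ℕ → A) (n : ℕ) : Prop :=
  ∀ i < n, w i = w (n - 1 - i)

private lemma pal_getElem {A : Type*} {u : List A} (hu : u.Palindrome) (i : ℕ)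
    (h : i < u.length) : u[i] = u[u.length - 1 - i]'(by omega) := by
  have h2 : i < u.reverse.length := by simpa using h
  have := List.getElem_reverse (l := u) (i := i) h2
  rw [← this]
  congr 1
  exact hu.reverse_eq.symm

/-- Key symmetry: if `x = u ++ v` with `u, v` palindromes, and `i + j + 1 ≡ |u| (mod |x|)`
with `i, j < |x|`, then `x[i] = x[j]`. -/
private lemma key_sym {A : Type*} {x u v : List A} (hu : u.Palindrome) (hv : v.Palindrome)
    (hx' : x = u ++ v) {i j : ℕ} (hi : i < x.length) (hj : j < x.length)
    (h : i + j + 1 ≡ u.length [MOD x.length]) : x[i] = x[j] := by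
  set L := x.length with hL
  set U := u.length with hU
  set V := v.length with hV
  have hLUV : L = U + V := by rw [hL, hx', List.length_append]
  have hdvd : (L : ℤ) ∣ (U : ℤ) - (i + j + 1) := h.dvd
  obtain ⟨k, hk⟩ := hdvd
  have hcase : i + j + 1 = U ∨ i + j + 1 = U + L := by
    rcases lt_trichotomy k 0 with h0 | h0 | h0
    · right
      have : k = -1 := by nlinarith [hk]
      rw [this] at hk; push_cast at hk; omega
    · left; rw [h0] at hk; push_cast at hk; omega
    · exfalso
      have : (1 : ℤ) ≤ k := h0
      nlinarith [hk]
  subst hx'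
  rcases hcase with hc | hc
  · -- both indices inside u
    have hiu : i < U := by omega
    have hju : j < U := by omega
    rw [List.getElem_append_left hiu, List.getElem_append_left hju]
    rw [pal_getElem hu i hiu]
    exact getElem_congr_idx (by omega)
  · -- both indices inside v
    have hiu : U ≤ i := by omega
    have hju : U ≤ j := by omega
    rw [List.getElem_append_right hiu, List.getElem_append_right hju]
    have hiv : i - U < V := by omega
    rw [pal_getElem hv (i - U) hiv]
    exact getElem_congr_idx (by omega)

theorem periodic_palindrome_density_eq_one {A : Type*} (x : List A) (hx : x ≠ [])
    (u v : List A) (hu : u.Palindrome) (hv : v.Palindrome) (hx' : x = u ++ v)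
    (w : ℕ → A)
    (hw : ∀ n : ℕ, w n = x.get ⟨n % x.length, Nat.mod_lt n (List.length_pos_iff.mpr hx)⟩)
    (N : ℕ → ℕ) (hmono : StrictMono N)
    (hrange : ∀ n : ℕ, (1 ≤ n ∧ PalindromicPrefix w n) ↔ ∃ i, N i = n) :
    Filter.limsup (fun i => (N (i + 1) : ℝ) / (N i : ℝ)) Filter.atTop = 1 := by
  set L := x.length with hLdef
  have hL : 0 < L := List.length_pos_iff.mpr hx
  -- any length `m ≥ 1` with `m % L = |u| % L` is a palindromic prefix length
  have hpal : ∀ m : ℕ, 1 ≤ m → m % L = u.length % L → PalindromicPrefix w m := by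
    intro m hm hmod i him
    rw [hw, hw]
    have heq : i % L + (m - 1 - i) % L + 1 ≡ u.length [MOD L] := by
      calc i % L + (m - 1 - i) % L + 1
          ≡ i + (m - 1 - i) + 1 [MOD L] :=
            Nat.ModEq.add ((Nat.mod_modEq i L).add (Nat.mod_modEq (m - 1 - i) L)) rfl
        _ = m := by omega
        _ ≡ u.length [MOD L] := (hmod : m % L = u.length % L)
    exact key_sym hu hv hx' (Nat.mod_lt _ hL) (Nat.mod_lt _ hL) heq
  -- each `N i` is at least 1
  have hN1 : ∀ i, 1 ≤ N i := fun i => ((hrange (N i)).mpr ⟨i, rfl⟩).1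
  -- gap bound: N (i+1) ≤ N i + L
  have hstep : ∀ i, N (i + 1) ≤ N i + L := by
    intro i
    set n := N i with hn
    set r := u.length % L with hr
    have hrL : r < L := Nat.mod_lt _ hL
    set s := (n + 1) % L with hs
    have hsL : s < L := Nat.mod_lt _ hL
    set m := n + 1 + (r + L - s) % L with hm
    have hmmod : m % L = r := by
      obtain ⟨q, hq⟩ : ∃ q, n + 1 = L * q + s := ⟨(n + 1) / L, by rw [hs]; exact (Nat.div_add_mod (n + 1) L).symm⟩
      have h1 : m % L = (n + 1 + (r + L - s)) % L := by rw [hm, Nat.add_mod_mod]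
      have hf : L * (q + 1) = L * q + L := by ring
      have h2 : n + 1 + (r + L - s) = L * (q + 1) + r := by omega
      rw [h1, h2, Nat.mul_add_mod, Nat.mod_eq_of_lt hrL]
    have hmle : m ≤ n + L := by
      have : (r + L - s) % L < L := Nat.mod_lt _ hL
      omega
    have hmgt : n < m := by omega
    have hm1 : 1 ≤ m := by omega
    obtain ⟨j, hj⟩ := (hrange m).mp ⟨hm1, hpal m hm1 hmmod⟩
    have hij : i < j := by
      by_contra hc
      push_neg at hc
      have h4 : N j ≤ N i := hmono.le_iff_le.mpr hc
      omega
    have h5 : N (i + 1) ≤ N j := hmono.le_iff_le.mpr hij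
    omega
  -- N i ≥ i, so N i → ∞
  have hNi : ∀ i, i ≤ N i := fun i => hmono.le_apply
  have htendN : Filter.Tendsto (fun i => (N i : ℝ)) Filter.atTop Filter.atTop := by
    exact Filter.tendsto_atTop_mono
      (fun i => by exact_mod_cast hNi i : ∀ i, ((i : ℕ) : ℝ) ≤ (N i : ℝ))
      tendsto_natCast_atTop_atTop
  -- squeeze
  have htend : Filter.Tendsto (fun i => (N (i + 1) : ℝ) / (N i : ℝ)) Filter.atTop (nhds 1) := by
    have hupper : Filter.Tendsto (fun i => 1 + (L : ℝ) / (N i : ℝ)) Filter.atTop (nhds 1) := by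
      have : Filter.Tendsto (fun i => (L : ℝ) / (N i : ℝ)) Filter.atTop (nhds 0) :=
        Filter.Tendsto.div_atTop tendsto_const_nhds htendN
      simpa using tendsto_const_nhds.add this
    refine tendsto_of_tendsto_of_tendsto_of_le_of_le tendsto_const_nhds hupper ?_ ?_
    · intro i
      have hpos : (0 : ℝ) < (N i : ℝ) := by exact_mod_cast hN1 i
      have hle : (N i : ℝ) ≤ (N (i + 1) : ℝ) := by
        exact_mod_cast (hmono (Nat.lt_succ_self i)).le
      exact (one_le_div hpos).mpr hle
    · intro i
      have hpos : (0 : ℝ) < (N i : ℝ) := by exact_mod_cast hN1 i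
      have hle : (N (i + 1) : ℝ) ≤ (N i : ℝ) + L := by exact_mod_cast hstep i
      rw [div_le_iff₀ hpos]
      have : (1 + (L : ℝ) / (N i : ℝ)) * (N i : ℝ) = (N i : ℝ) + L := by
        field_simp
      rw [this]
      exact hle
  exact htend.limsup_eq
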